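/- Let α = ∛2 and β a real root of X² + α²X + (1 - α²). Consider the six vectors u₁,…,u₆ ∈ ℝ¹⁰ given by u₁ = (0,0,1,-αβ,0,0,0,0,0,0), u₂ = (0,1,0,α+β,0,0,0,0,0,0), u₃ = (-α+2,0,0,0,(α-4)/(4α²-2),0,0,0,0,1), u₄ = (-2α²+1,0,0,0,1/2,0,0,0,1,0), u₅ = (α²+2α+2β+2,0,0,0,(α²-4α)/(4α²-2),0,1,0,0,0), u₆ = (-α+2,0,0,0,(-α+4)/(4α²-2),1,0,0,0,0). Then the real span W = ⟨u₁,…,u₆⟩_ℝ satisfies W ∩ ℚ¹⁰ = {0}. -/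

import Mathlib

open Polynomial in
lemma aux_no_rat_cube (b : ℚ) : b ^ 3 ≠ 2 := by
  intro h
  have h2 : ((b:ℝ)) ^ 3 = 2 := by exact_mod_cast h
  have hirr : Irrational (b:ℝ) := by
    refine irrational_nrt_of_notint_nrt 3 2 (by exact_mod_cast h2) ?_ (by norm_num)
    rintro ⟨y, hy⟩
    have h3 : (y:ℝ) ^ 3 = 2 := by rw [← hy]; exact h2
    have h4 : y ^ 3 = 2 := by exact_mod_cast h3
    have hy2 : y ≤ 1 ∨ 2 ≤ y := by omega
    rcases hy2 with hy2 | hy2 <;> nlinarith [sq_nonneg (2*y+1), sq_nonneg y, sq_nonneg (y-1)]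
  exact hirr ⟨b, rfl⟩

open Polynomial in
lemma aux_minpoly_cbrt (α : ℝ) (hα : α ^ 3 = 2) :
    minpoly ℚ α = X ^ 3 - C 2 := by
  have hirr : Irreducible (X ^ 3 - C (2:ℚ)) :=
    X_pow_sub_C_irreducible_of_prime (by norm_num) (fun b => aux_no_rat_cube b)
  have hroot : Polynomial.aeval α (X ^ 3 - C (2:ℚ)) = 0 := by simp [hα]
  exact (minpoly.eq_of_irreducible_of_monic hirr hroot
    (Polynomial.monic_X_pow_sub_C _ (by norm_num))).symm

open Polynomial in
lemma aux_lin_indep (α : ℝ) (hα : α ^ 3 = 2) (a b c : ℚ)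
    (h : (a:ℝ) + (b:ℝ)*α + (c:ℝ)*α^2 = 0) : a = 0 ∧ b = 0 ∧ c = 0 := by
  have hp : (C c * X^2 + C b * X + C a : ℚ[X]) = 0 := by
    by_contra hp0
    have hroot : Polynomial.aeval α (C c * X^2 + C b * X + C a : ℚ[X]) = 0 := by
      simp only [map_add, map_mul, aeval_C, aeval_X, map_pow, eq_ratCast]
      push_cast
      linarith [h]
    have hdle := minpoly.degree_le_of_ne_zero ℚ α hp0 hroot
    rw [aux_minpoly_cbrt α hα, Polynomial.degree_X_pow_sub_C (by norm_num)] at hdle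
    have h2 : (C c * X^2 + C b * X + C a : ℚ[X]).degree ≤ 2 := Polynomial.degree_quadratic_le
    have := le_trans hdle h2
    norm_num at this
  refine ⟨?_, ?_, ?_⟩
  · have := congrArg (fun q => Polynomial.coeff q 0) hp
    simpa using this
  · have := congrArg (fun q => Polynomial.coeff q 1) hp
    simpa using this
  · have := congrArg (fun q => Polynomial.coeff q 2) hp
    simpa using this

/-- The real span of the six kernel vectors u₁,…,u₆ ∈ ℝ¹⁰ meets
the rational points only in 0. -/
theorem span_kernel_no_rational_vectors (α β : ℝ) (hα : α ^ 3 = 2)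
    (hβ : β ^ 2 + α ^ 2 * β + (1 - α ^ 2) = 0)
    (hβα : β ∉ IntermediateField.adjoin ℚ ({α} : Set ℝ)) :
    ∀ v ∈ Submodule.span ℝ
      ({![0, 0, 1, -(α*β), 0, 0, 0, 0, 0, 0],
        ![0, 1, 0, α + β, 0, 0, 0, 0, 0, 0],
        ![-α + 2, 0, 0, 0, (α - 4)/(4*α^2 - 2), 0, 0, 0, 0, 1],
        ![-2*α^2 + 1, 0, 0, 0, 1/2, 0, 0, 0, 1, 0],
        ![α^2 + 2*α + 2*β + 2, 0, 0, 0, (α^2 - 4*α)/(4*α^2 - 2), 0, 1, 0, 0, 0],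
        ![-α + 2, 0, 0, 0, (-α + 4)/(4*α^2 - 2), 1, 0, 0, 0, 0]} :
        Set (Fin 10 → ℝ)),
      (∀ i : Fin 10, ∃ q : ℚ, v i = (q : ℝ)) → v = 0 := by
  intro v hv hq
  set K := IntermediateField.adjoin ℚ ({α} : Set ℝ) with hK
  have hαK : α ∈ K := IntermediateField.subset_adjoin ℚ {α} rfl
  have hqK : ∀ q : ℚ, ((q:ℝ)) ∈ K := fun q => SubfieldClass.ratCast_mem K q
  have hbeta : ∀ x y : ℝ, x ∈ K → y ∈ K → y * β = x → y = 0 := by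
    intro x y hx hy hxy
    by_contra hy0
    refine hβα ?_
    have hβeq : β = x * y⁻¹ := by field_simp; linarith [hxy]
    rw [hβeq]; exact mul_mem hx (inv_mem hy)
  have hden : 4*α^2 - 2 ≠ 0 := by
    intro h0
    obtain ⟨_, _, hc⟩ := aux_lin_indep α hα (-1/2) 0 1 (by push_cast; linarith)
    norm_num at hc
  simp only [Submodule.mem_span_insert, Submodule.mem_span_singleton] at hv
  obtain ⟨c1, _, ⟨c2, _, ⟨c3, _, ⟨c4, _, ⟨c5, _, ⟨c6, rfl⟩, rfl⟩, rfl⟩, rfl⟩, rfl⟩, rfl⟩ := hv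
  -- rational coefficients
  obtain ⟨p1, hp1⟩ := hq 2
  obtain ⟨p2, hp2⟩ := hq 1
  obtain ⟨p3, hp3⟩ := hq 9
  obtain ⟨p4, hp4⟩ := hq 8
  obtain ⟨p5, hp5⟩ := hq 6
  obtain ⟨p6, hp6⟩ := hq 5
  have hc1 : c1 = (p1:ℝ) := by
    have h' : c1 * 1 + (c2 * 0 + (c3 * 0 + (c4 * 0 + (c5 * 0 + c6 * 0)))) = (p1:ℝ) := hp1
    linarith [h']
  have hc2 : c2 = (p2:ℝ) := by
    have h' : c1 * 0 + (c2 * 1 + (c3 * 0 + (c4 * 0 + (c5 * 0 + c6 * 0)))) = (p2:ℝ) := hp2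
    linarith [h']
  have hc3 : c3 = (p3:ℝ) := by
    have h' : c1 * 0 + (c2 * 0 + (c3 * 1 + (c4 * 0 + (c5 * 0 + c6 * 0)))) = (p3:ℝ) := hp3
    linarith [h']
  have hc4 : c4 = (p4:ℝ) := by
    have h' : c1 * 0 + (c2 * 0 + (c3 * 0 + (c4 * 1 + (c5 * 0 + c6 * 0)))) = (p4:ℝ) := hp4
    linarith [h']
  have hc5 : c5 = (p5:ℝ) := by
    have h' : c1 * 0 + (c2 * 0 + (c3 * 0 + (c4 * 0 + (c5 * 1 + c6 * 0)))) = (p5:ℝ) := hp5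
    linarith [h']
  have hc6 : c6 = (p6:ℝ) := by
    have h' : c1 * 0 + (c2 * 0 + (c3 * 0 + (c4 * 0 + (c5 * 0 + c6 * 1)))) = (p6:ℝ) := hp6
    linarith [h']
  -- index 3
  obtain ⟨r3, e3⟩ := hq 3
  have e3' : c1 * (-(α*β)) + (c2 * (α + β) + (c3 * 0 + (c4 * 0 + (c5 * 0 + c6 * 0)))) = (r3:ℝ) := e3
  -- index 0
  obtain ⟨r0, e0⟩ := hq 0
  have e0' : c1 * 0 + (c2 * 0 + (c3 * (-α + 2) + (c4 * (-2*α^2 + 1) +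
      (c5 * (α^2 + 2*α + 2*β + 2) + c6 * (-α + 2))))) = (r0:ℝ) := e0
  -- index 4
  obtain ⟨r4, e4⟩ := hq 4
  have e4' : c1 * 0 + (c2 * 0 + (c3 * ((α - 4)/(4*α^2 - 2)) + (c4 * (1/2) +
      (c5 * ((α^2 - 4*α)/(4*α^2 - 2)) + c6 * ((-α + 4)/(4*α^2 - 2)))))) = (r4:ℝ) := e4
  -- Step A : c1 = c2 = 0
  have hA : c2 - c1 * α = 0 := by
    refine hbeta ((r3:ℝ) - c2 * α) _ ?_ ?_ (by linear_combination e3')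
    · exact sub_mem (hqK r3) (mul_mem (hc2 ▸ hqK p2) hαK)
    · exact sub_mem (hc2 ▸ hqK p2) (mul_mem (hc1 ▸ hqK p1) hαK)
  obtain ⟨hp2z, hp1z, -⟩ := aux_lin_indep α hα p2 (-p1) 0
    (by push_cast; rw [← hc1, ← hc2]; linear_combination hA)
  have hc1z : c1 = 0 := by simp [hc1, neg_eq_zero.mp hp1z]
  have hc2z : c2 = 0 := by simp [hc2, hp2z]
  -- Step B : c5 = 0, c4 = 0, c3 + c6 = 0
  have h1K : (1:ℝ) ∈ K := one_mem K
  have h2K : (2:ℝ) ∈ K := by exact_mod_cast hqK 2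
  have hm1 : (-α + 2 : ℝ) ∈ K := add_mem (neg_mem hαK) h2K
  have hm2 : (-2*α^2 + 1 : ℝ) ∈ K := by
    have h' : (-2*α^2 + 1 : ℝ) = -(2*α^2) + 1 := by ring
    rw [h']; exact add_mem (neg_mem (mul_mem h2K (pow_mem hαK 2))) h1K
  have hm3 : (α^2 + 2*α + 2 : ℝ) ∈ K := add_mem (add_mem (pow_mem hαK 2) (mul_mem h2K hαK)) h2K
  have hB : 2 * c5 = 0 := by
    refine hbeta ((r0:ℝ) - (c3 * (-α + 2) + c4 * (-2*α^2 + 1) +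
        c5 * (α^2 + 2*α + 2) + c6 * (-α + 2))) _ ?_ ?_ (by linear_combination e0')
    · refine sub_mem (hqK r0) (add_mem (add_mem (add_mem ?_ ?_) ?_) ?_)
      · exact mul_mem (hc3 ▸ hqK p3) hm1
      · exact mul_mem (hc4 ▸ hqK p4) hm2
      · exact mul_mem (hc5 ▸ hqK p5) hm3
      · exact mul_mem (hc6 ▸ hqK p6) hm1
    · exact mul_mem h2K (hc5 ▸ hqK p5)
  have hc5z : c5 = 0 := by linarith [hB]
  obtain ⟨-, hb, hcc⟩ := aux_lin_indep α hα (2*p3 + p4 + 2*p6 - r0) (-(p3 + p6)) (-2*p4)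
    (by push_cast; rw [← hc3, ← hc4, ← hc6]; linear_combination e0' - (α^2 + 2*α + 2*β + 2) * hc5z)
  have hp4z : p4 = 0 := by linarith [congrArg (fun x : ℚ => -x/2) hcc, neg_neg p4]
  have hc4z : c4 = 0 := by rw [hc4]; exact_mod_cast congrArg Rat.cast hp4z
  have hp36 : p6 = -p3 := by linarith [neg_eq_zero.mp hb]
  -- Step C : c3 = c6 = 0
  have hinv : (4*α^2 - 2) * (4*α^2 - 2)⁻¹ = 1 := mul_inv_cancel₀ hden
  obtain ⟨-, hp3z', -⟩ := aux_lin_indep α hα (2*r4 - 8*p3) (2*p3) (-4*r4)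
    (by
      push_cast
      rw [← hc3]
      rw [hc4z, hc5z, hc6, hp36] at e4'
      push_cast at e4'
      rw [← hc3] at e4'
      field_simp at e4'
      linear_combination ((4*α^2 - 2)/2) * e4' - 2*c3*(α - 4) * hinv)
  have hp3z : p3 = 0 := by linarith [hp3z']
  have hc3z : c3 = 0 := by simp [hc3, hp3z]
  have hc6z : c6 = 0 := by simp [hc6, hp36, hp3z]
  rw [hc1z, hc2z, hc3z, hc4z, hc5z, hc6z]
  simp
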